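/- Let 1 ≤ q < q' < 2, let V be a real Banach space and let X ∈ C_{0,q}(V). Then ‖X − π_P X‖_{q'} → 0 as the mesh |P| → 0; that is, for every ε > 0 there exists δ > 0 such that every finite partition P of [0,1] with mesh |P| < δ satisfies ‖X − π_P X‖_{q'} ≤ ε. -/

import Mathlib

/-!
STATEMENT 1: convergence of the piecewise linear approximation in `q'`-variation norm.
-/

open scoped ENNReal

universe u

/-- A finite partition of the interval `[s,t]`: monotone points `pt 0 = s ≤ pt 1 ≤ ⋯ ≤ pt N = t`. -/
structure Subdivision (s t : ℝ) where
  N : ℕ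
  pt : ℕ → ℝ
  pos : 0 < N
  first : pt 0 = s
  last : pt N = t
  mono : ∀ i, i < N → pt i ≤ pt (i + 1)

/-- The mesh of a partition: the largest length of a subinterval. -/
noncomputable def Subdivision.mesh {s t : ℝ} (P : Subdivision s t) : ℝ :=
  (Finset.range P.N).sup' (Finset.nonempty_range_iff.mpr P.pos.ne')
    (fun i => P.pt (i + 1) - P.pt i)

/-- The `q`-variation norm of a path `X : [0,1] → V`, as a value in `[0,∞]`. -/
noncomputable def qVar {V : Type u} [NormedAddCommGroup V] (q : ℝ) (X : ℝ → V) : ℝ≥0∞ :=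
  ⨆ P : Subdivision 0 1,
    ENNReal.ofReal
      ((∑ i ∈ Finset.range P.N, ‖X (P.pt (i + 1)) - X (P.pt i)‖ ^ q) ^ (1 / q))

/-- `Y` is the piecewise linear approximation of the path `X` along the partition `P`. -/
def IsPiecewiseLinearApprox {V : Type u} [NormedAddCommGroup V] [Module ℝ V]
    (P : Subdivision 0 1) (X Y : ℝ → V) : Prop :=
  ∀ i, i < P.N → ∀ u, P.pt i ≤ u → u ≤ P.pt (i + 1) →
    Y u = X (P.pt i)
      + ((u - P.pt i) / (P.pt (i + 1) - P.pt i)) • (X (P.pt (i + 1)) - X (P.pt i))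

namespace Subdivision

lemma pt_le_pt {s t : ℝ} (P : Subdivision s t) {i j : ℕ} (hij : i ≤ j) (hj : j ≤ P.N) :
    P.pt i ≤ P.pt j := by
  induction j with
  | zero => simp [Nat.le_zero.mp hij]
  | succ n ih =>
    rcases Nat.lt_or_ge i (n + 1) with h | h
    · exact le_trans (ih (Nat.lt_succ_iff.mp h) (le_trans (Nat.le_succ n) hj))
        (P.mono n (Nat.lt_of_succ_le hj))
    · have : i = n + 1 := le_antisymm hij h
      simp [this]

lemma pt_nonneg (P : Subdivision 0 1) {i : ℕ} (hi : i ≤ P.N) : 0 ≤ P.pt i := by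
  have := P.pt_le_pt (Nat.zero_le i) hi; rwa [P.first] at this

lemma pt_le_one (P : Subdivision 0 1) {i : ℕ} (hi : i ≤ P.N) : P.pt i ≤ 1 := by
  have := P.pt_le_pt hi le_rfl; rwa [P.last] at this

open Classical in
noncomputable def idx (P : Subdivision 0 1) (x : ℝ) : ℕ :=
  Nat.findGreatest (fun i => P.pt i ≤ x) (P.N - 1)

lemma idx_lt (P : Subdivision 0 1) (x : ℝ) : P.idx x < P.N :=
  lt_of_le_of_lt (Nat.findGreatest_le _) (Nat.sub_lt P.pos one_pos)

lemma pt_idx_le (P : Subdivision 0 1) {x : ℝ} (hx : 0 ≤ x) : P.pt (P.idx x) ≤ x := by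
  classical
  have h0 : P.pt 0 ≤ x := by rw [P.first]; exact hx
  have h := Nat.findGreatest_spec (P := fun i => P.pt i ≤ x) (m := 0) (n := P.N - 1)
    (Nat.zero_le _) h0
  exact h

lemma le_pt_idx_succ (P : Subdivision 0 1) {x : ℝ} (hx : x ≤ 1) : x ≤ P.pt (P.idx x + 1) := by
  classical
  have hidx : P.idx x = Nat.findGreatest (fun i => P.pt i ≤ x) (P.N - 1) := rfl
  rcases Nat.lt_or_ge (P.idx x) (P.N - 1) with h | h
  · rw [hidx] at h
    have h2 := Nat.findGreatest_is_greatest (P := fun i => P.pt i ≤ x) (n := P.N - 1)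
      (k := Nat.findGreatest (fun i => P.pt i ≤ x) (P.N - 1) + 1) (Nat.lt_succ_self _) (by omega)
    rw [hidx]
    exact (not_le.mp h2).le
  · have hN : P.idx x + 1 = P.N := by have := P.idx_lt x; omega
    rw [hN, P.last]; exact hx

lemma idx_mono (P : Subdivision 0 1) {x y : ℝ} (hxy : x ≤ y) : P.idx x ≤ P.idx y := by
  classical
  exact Nat.findGreatest_mono (fun i hi => le_trans hi hxy) le_rfl

end Subdivision

/-- Sum of lengths of ordered disjoint intervals inside `[a,b]` is at most `b - a`. -/
lemma sum_len_le (uu vv : ℕ → ℝ) (a : ℝ) (T : Finset ℕ) :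
    ∀ (b : ℝ), (∀ j ∈ T, a ≤ uu j) → (∀ j ∈ T, uu j ≤ vv j) → (∀ j ∈ T, vv j ≤ b) →
    (∀ j ∈ T, ∀ k ∈ T, j < k → vv j ≤ uu k) → a ≤ b →
    ∑ j ∈ T, (vv j - uu j) ≤ b - a := by
  induction T using Finset.induction_on_max with
  | empty => intro b _ _ _ _ hab; simp; linarith
  | insert M T' hT' ih =>
    intro b h1 h2 h3 h4 hab
    have hM : M ∈ insert M T' := Finset.mem_insert_self _ _
    rw [Finset.sum_insert (fun h => lt_irrefl M (hT' M h))]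
    have ihb := ih (uu M)
      (fun j hj => h1 j (Finset.mem_insert_of_mem hj))
      (fun j hj => h2 j (Finset.mem_insert_of_mem hj))
      (fun j hj => h4 j (Finset.mem_insert_of_mem hj) M hM (hT' j hj))
      (fun j hj k hk hjk => h4 j (Finset.mem_insert_of_mem hj) k (Finset.mem_insert_of_mem hk) hjk)
      (h1 M hM)
    have h5 := h3 M hM
    have h6 := h2 M hM
    linarith

/-- Sum of `q`-powers of `X`-increments over ordered disjoint intervals in `[0,1]`
is bounded by the `q`-variation bound. -/
lemma interleave_bound {V : Type u} [NormedAddCommGroup V] (q : ℝ) (X : ℝ → V) (C : ℝ)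
    (key : ∀ Q : Subdivision 0 1,
      ∑ i ∈ Finset.range Q.N, ‖X (Q.pt (i + 1)) - X (Q.pt i)‖ ^ q ≤ C ^ q)
    (hCq : 0 ≤ C ^ q) (m : ℕ) (uu vv : ℕ → ℝ)
    (huv : ∀ k, k < m → uu k ≤ vv k)
    (hvu : ∀ k, k + 1 < m → vv k ≤ uu (k + 1))
    (h0 : 0 < m → 0 ≤ uu 0) (h1 : 0 < m → vv (m - 1) ≤ 1) :
    ∑ k ∈ Finset.range m, ‖X (vv k) - X (uu k)‖ ^ q ≤ C ^ q := by
  rcases Nat.eq_zero_or_pos m with hm | hm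
  · subst hm; simpa using hCq
  set qt : ℕ → ℝ := fun j => if j = 0 then 0 else if 2 * m + 1 ≤ j then 1
    else if j % 2 = 1 then uu (j / 2) else vv (j / 2 - 1) with hqt
  have hqt0 : qt 0 = 0 := by simp [hqt]
  have hqtN : qt (2 * m + 1) = 1 := by
    simp only [hqt]; rw [if_neg (by omega), if_pos (by omega)]
  have hqodd : ∀ k, k < m → qt (2 * k + 1) = uu k := by
    intro k hk; simp only [hqt]
    rw [if_neg (by omega), if_neg (by omega), if_pos (by omega)]
    congr 1; omega
  have hqeven : ∀ k, k < m → qt (2 * k + 2) = vv k := by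
    intro k hk; simp only [hqt]
    rw [if_neg (by omega), if_neg (by omega), if_neg (by omega)]
    congr 1; omega
  have hmono : ∀ j, j < 2 * m + 1 → qt j ≤ qt (j + 1) := by
    intro j hj
    rcases Nat.eq_zero_or_pos j with h0j | h0j
    · subst h0j
      rw [hqt0]
      have h := hqodd 0 hm
      norm_num at h
      rw [show (0:ℕ) + 1 = 1 from rfl, h]
      exact h0 hm
    · rcases Nat.even_or_odd j with ⟨k, hk⟩ | ⟨k, hk⟩
      · obtain ⟨k', rfl⟩ : ∃ k', j = 2 * k' + 2 := ⟨k - 1, by omega⟩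
        have hk'm : k' + 1 ≤ m := by omega
        rw [hqeven k' (by omega)]
        rcases lt_or_eq_of_le hk'm with h | h
        · rw [show 2 * k' + 2 + 1 = 2 * (k' + 1) + 1 by ring, hqodd (k' + 1) h]
          exact hvu k' (by omega)
        · rw [show 2 * k' + 2 + 1 = 2 * m + 1 by omega, hqtN]
          have hk'' : k' = m - 1 := by omega
          rw [hk'']
          exact h1 hm
      · obtain ⟨k', rfl⟩ : ∃ k', j = 2 * k' + 1 := ⟨k, by omega⟩
        have hk'm : k' < m := by omega
        rw [hqodd k' hk'm, show 2 * k' + 1 + 1 = 2 * k' + 2 by ring, hqeven k' hk'm]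
        exact huv k' hk'm
  have hsum := key ⟨2 * m + 1, qt, by omega, hqt0, hqtN, hmono⟩
  calc ∑ k ∈ Finset.range m, ‖X (vv k) - X (uu k)‖ ^ q
      = ∑ k ∈ Finset.range m, ‖X (qt (2 * k + 1 + 1)) - X (qt (2 * k + 1))‖ ^ q := by
        refine Finset.sum_congr rfl fun k hk => ?_
        rw [Finset.mem_range] at hk
        rw [show 2 * k + 1 + 1 = 2 * k + 2 by ring, hqodd k hk, hqeven k hk]
    _ = ∑ j ∈ (Finset.range m).image (fun k => 2 * k + 1),
          ‖X (qt (j + 1)) - X (qt j)‖ ^ q := by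
        rw [Finset.sum_image (by intro a _ b _ h; simp only at h; omega)]
    _ ≤ ∑ j ∈ Finset.range (2 * m + 1), ‖X (qt (j + 1)) - X (qt j)‖ ^ q := by
        apply Finset.sum_le_sum_of_subset_of_nonneg
        · intro j hj; simp only [Finset.mem_image, Finset.mem_range] at hj ⊢; omega
        · intro i _ _; positivity
    _ ≤ C ^ q := hsum

/-- Let `1 ≤ q < q' < 2` and `X ∈ C_{0,q}(V)`. Then
`‖X − π_P X‖_{q'} → 0` as the mesh `|P| → 0`. -/
theorem statement1 (q q' : ℝ) (hq : 1 ≤ q) (hqq' : q < q') (hq' : q' < 2)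
    (V : Type u) [NormedAddCommGroup V] [NormedSpace ℝ V] [CompleteSpace V]
    (X : ℝ → V) (hX0 : X 0 = 0) (hXcont : ContinuousOn X (Set.Icc 0 1))
    (hXfin : qVar q X < ⊤) :
    ∀ ε > (0 : ℝ), ∃ δ > (0 : ℝ),
      ∀ P : Subdivision 0 1, P.mesh < δ →
        ∀ Y : ℝ → V, IsPiecewiseLinearApprox P X Y →
          qVar q' (fun u => X u - Y u) ≤ ENNReal.ofReal ε := by
  classical
  intro ε hε
  have hq0 : (0:ℝ) < q := lt_of_lt_of_le one_pos hq
  have hq'1 : (1:ℝ) < q' := lt_of_le_of_lt hq hqq'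
  have hq'0 : (0:ℝ) < q' := lt_trans one_pos hq'1
  have hr : (0:ℝ) < q' - q := sub_pos.mpr hqq'
  set C : ℝ := (qVar q X).toReal with hCdef
  have hC : 0 ≤ C := by rw [hCdef]; exact ENNReal.toReal_nonneg
  have hCq0 : 0 ≤ C ^ q := Real.rpow_nonneg hC q
  -- every `q`-sum of increments of `X` is at most `C ^ q`
  have key : ∀ Q : Subdivision 0 1,
      ∑ i ∈ Finset.range Q.N, ‖X (Q.pt (i + 1)) - X (Q.pt i)‖ ^ q ≤ C ^ q := by
    intro Q
    set S := ∑ i ∈ Finset.range Q.N, ‖X (Q.pt (i + 1)) - X (Q.pt i)‖ ^ q with hS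
    have hS0 : 0 ≤ S := Finset.sum_nonneg fun i _ => Real.rpow_nonneg (norm_nonneg _) q
    have h1 : ENNReal.ofReal (S ^ (1 / q)) ≤ qVar q X :=
      le_iSup (fun Q : Subdivision 0 1 => ENNReal.ofReal
        ((∑ i ∈ Finset.range Q.N, ‖X (Q.pt (i + 1)) - X (Q.pt i)‖ ^ q) ^ (1 / q))) Q
    have h2 : ENNReal.ofReal (S ^ (1 / q)) ≤ ENNReal.ofReal C := by
      refine le_trans h1 ?_
      rw [hCdef, ENNReal.ofReal_toReal hXfin.ne]
    have h3 : S ^ (1 / q) ≤ C := (ENNReal.ofReal_le_ofReal_iff hC).mp h2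
    calc S = (S ^ (1 / q)) ^ q := by
          rw [← Real.rpow_mul hS0, one_div_mul_cancel hq0.ne', Real.rpow_one]
      _ ≤ C ^ q := Real.rpow_le_rpow (Real.rpow_nonneg hS0 _) h3 hq0.le
  -- elementary real-power inequalities
  have interp : ∀ a w : ℝ, 0 ≤ a → 0 ≤ w → a ≤ w → a ^ q' ≤ w ^ (q' - q) * a ^ q := by
    intro a w ha hw haw
    rcases eq_or_lt_of_le ha with h | h
    · rw [← h, Real.zero_rpow hq'0.ne', Real.zero_rpow hq0.ne', mul_zero]
    · calc a ^ q' = a ^ (q' - q) * a ^ q := by rw [← Real.rpow_add h, sub_add_cancel]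
        _ ≤ w ^ (q' - q) * a ^ q :=
          mul_le_mul_of_nonneg_right (Real.rpow_le_rpow ha haw hr.le) (Real.rpow_nonneg ha q)
  have twopow : ∀ p x y : ℝ, 1 ≤ p → 0 ≤ x → 0 ≤ y →
      (x + y) ^ p ≤ 2 ^ p * (x ^ p + y ^ p) := by
    intro p x y hp hx hy
    have hmax : 0 ≤ max x y := le_max_of_le_left hx
    have h1 : x + y ≤ 2 * max x y := by
      rcases le_total x y with h | h
      · rw [max_eq_right h]; linarith
      · rw [max_eq_left h]; linarith
    calc (x + y) ^ p ≤ (2 * max x y) ^ p :=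
          Real.rpow_le_rpow (by positivity) h1 (by linarith)
      _ = 2 ^ p * (max x y) ^ p := Real.mul_rpow (by norm_num) hmax
      _ ≤ 2 ^ p * (x ^ p + y ^ p) := by
          refine mul_le_mul_of_nonneg_left ?_ (Real.rpow_nonneg (by norm_num) p)
          rcases le_total x y with h | h
          · rw [max_eq_right h]
            exact le_add_of_nonneg_left (Real.rpow_nonneg hx p)
          · rw [max_eq_left h]
            exact le_add_of_nonneg_right (Real.rpow_nonneg hy p)
  have rpow_le_self : ∀ l : ℝ, 0 ≤ l → l ≤ 1 → l ^ q ≤ l := by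
    intro l h0 h1
    rcases eq_or_lt_of_le h0 with h | h
    · rw [← h, Real.zero_rpow hq0.ne']
    · calc l ^ q ≤ l ^ (1 : ℝ) := Real.rpow_le_rpow_of_exponent_ge h h1 hq
        _ = l := Real.rpow_one l
  -- constants
  set K : ℝ := 2 ^ q' * 4 ^ (q' - q) * 2 ^ q * 4 with hKdef
  have hK : 0 < K := by
    have h1 := Real.rpow_pos_of_pos (by norm_num : (0:ℝ) < 2) q'
    have h2 := Real.rpow_pos_of_pos (by norm_num : (0:ℝ) < 4) (q' - q)
    have h3 := Real.rpow_pos_of_pos (by norm_num : (0:ℝ) < 2) q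
    positivity
  have hden : 0 < K * (C ^ q + 1) := by positivity
  set ρ : ℝ := ε ^ q' / (K * (C ^ q + 1)) with hρdef
  have hρ : 0 < ρ := div_pos (Real.rpow_pos_of_pos hε q') hden
  set η : ℝ := min 1 (ρ ^ (1 / (q' - q))) with hηdef
  have hη : 0 < η := lt_min one_pos (Real.rpow_pos_of_pos hρ _)
  have hηρ : η ^ (q' - q) ≤ ρ := by
    have h2 : η ^ (q' - q) ≤ (ρ ^ (1 / (q' - q))) ^ (q' - q) :=
      Real.rpow_le_rpow hη.le (min_le_right _ _) hr.le
    rwa [← Real.rpow_mul hρ.le, one_div_mul_cancel hr.ne', Real.rpow_one] at h2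
  -- uniform continuity modulus
  have hucont : UniformContinuousOn X (Set.Icc 0 1) :=
    isCompact_Icc.uniformContinuousOn_of_continuous hXcont
  obtain ⟨δ, hδ, hmod'⟩ := Metric.uniformContinuousOn_iff.mp hucont η hη
  have hmod : ∀ u ∈ Set.Icc (0:ℝ) 1, ∀ v ∈ Set.Icc (0:ℝ) 1,
      dist u v < δ → ‖X u - X v‖ ≤ η := by
    intro u hu v hv h
    have h2 := hmod' u hu v hv h
    rw [dist_eq_norm] at h2
    exact h2.le
  refine ⟨δ, hδ, ?_⟩
  intro P hmesh Y hY
  set Z : ℝ → V := fun u => X u - Y u with hZdef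
  have hpt01 : ∀ i, i ≤ P.N → P.pt i ∈ Set.Icc (0:ℝ) 1 :=
    fun i hi => ⟨P.pt_nonneg hi, P.pt_le_one hi⟩
  have hseg : ∀ i, i < P.N → P.pt (i + 1) - P.pt i < δ := by
    intro i hi
    exact lt_of_le_of_lt
      (Finset.le_sup' (fun i => P.pt (i + 1) - P.pt i) (Finset.mem_range.mpr hi)) hmesh
  have hXseg : ∀ i, i < P.N → ‖X (P.pt (i + 1)) - X (P.pt i)‖ ≤ η := by
    intro i hi
    refine hmod _ (hpt01 _ hi) _ (hpt01 _ hi.le) ?_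
    rw [Real.dist_eq, abs_of_nonneg (sub_nonneg.mpr (P.mono i hi))]
    exact hseg i hi
  -- `Z` vanishes at partition points
  have hZpt : ∀ i, i ≤ P.N → Z (P.pt i) = 0 := by
    intro i hi
    rcases lt_or_eq_of_le hi with h | h
    · have hy := hY i h (P.pt i) le_rfl (P.mono i h)
      rw [sub_self, zero_div, zero_smul, add_zero] at hy
      simp [hZdef, hy]
    · subst h
      obtain ⟨n, hn⟩ : ∃ n, P.N = n + 1 := ⟨P.N - 1, (Nat.succ_pred_eq_of_pos P.pos).symm⟩
      have hnN : n < P.N := by omega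
      have hy := hY n hnN (P.pt (n + 1)) (P.mono n hnN) le_rfl
      rcases eq_or_ne (P.pt (n + 1) - P.pt n) 0 with hL | hL
      · rw [hL, zero_div, zero_smul, add_zero] at hy
        rw [hn, show Z (P.pt (n + 1)) = X (P.pt (n + 1)) - Y (P.pt (n + 1)) from rfl, hy,
          sub_eq_zero]
        exact congrArg X (sub_eq_zero.mp hL)
      · rw [div_self hL, one_smul] at hy
        rw [hn, show Z (P.pt (n + 1)) = X (P.pt (n + 1)) - Y (P.pt (n + 1)) from rfl, hy]
        abel
  -- `Z` is uniformly small
  have hZsmall : ∀ x ∈ Set.Icc (0:ℝ) 1, ‖Z x‖ ≤ 2 * η := by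
    intro x hx
    have hi := P.idx_lt x
    have h1 : P.pt (P.idx x) ≤ x := P.pt_idx_le hx.1
    have h2 : x ≤ P.pt (P.idx x + 1) := P.le_pt_idx_succ hx.2
    have hy := hY (P.idx x) hi x h1 h2
    have hzx : Z x = (X x - X (P.pt (P.idx x)))
        - ((x - P.pt (P.idx x)) / (P.pt (P.idx x + 1) - P.pt (P.idx x))) •
          (X (P.pt (P.idx x + 1)) - X (P.pt (P.idx x))) := by
      rw [show Z x = X x - Y x from rfl, hy]; abel
    have hXa : ‖X x - X (P.pt (P.idx x))‖ ≤ η := by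
      refine hmod _ hx _ (hpt01 _ hi.le) ?_
      rw [Real.dist_eq, abs_of_nonneg (by linarith)]
      have h3 := hseg _ hi; linarith
    have hcoef : |(x - P.pt (P.idx x)) / (P.pt (P.idx x + 1) - P.pt (P.idx x))| ≤ 1 := by
      rcases eq_or_lt_of_le (sub_nonneg.mpr (P.mono _ hi)) with hL | hL
      · rw [← hL, div_zero, abs_zero]; exact zero_le_one
      · rw [abs_div, abs_of_nonneg (by linarith), abs_of_pos hL, div_le_one hL]
        linarith
    calc ‖Z x‖ ≤ ‖X x - X (P.pt (P.idx x))‖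
          + ‖((x - P.pt (P.idx x)) / (P.pt (P.idx x + 1) - P.pt (P.idx x))) •
            (X (P.pt (P.idx x + 1)) - X (P.pt (P.idx x)))‖ := by
          rw [hzx]; exact norm_sub_le _ _
      _ ≤ η + 1 * η := by
          rw [norm_smul, Real.norm_eq_abs]
          exact add_le_add hXa
            (mul_le_mul hcoef (hXseg _ hi) (norm_nonneg _) zero_le_one)
      _ = 2 * η := by ring
  -- increment of `Z` within one segment
  have hZseg : ∀ i, i < P.N → ∀ a b : ℝ, P.pt i ≤ a → a ≤ b → b ≤ P.pt (i + 1) →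
      ‖Z b - Z a‖ ≤ ‖X b - X a‖
        + (b - a) / (P.pt (i + 1) - P.pt i) * ‖X (P.pt (i + 1)) - X (P.pt i)‖ := by
    intro i hi a b hpa hab hbp
    have hya := hY i hi a hpa (hab.trans hbp)
    have hyb := hY i hi b (hpa.trans hab) hbp
    have hco : (b - P.pt i) / (P.pt (i + 1) - P.pt i) - (a - P.pt i) / (P.pt (i + 1) - P.pt i)
        = (b - a) / (P.pt (i + 1) - P.pt i) := by ring
    have hzz : Z b - Z a = (X b - X a)
        - ((b - a) / (P.pt (i + 1) - P.pt i)) • (X (P.pt (i + 1)) - X (P.pt i)) := by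
      calc Z b - Z a = (X b - X a) - (Y b - Y a) := by
            rw [show Z b = X b - Y b from rfl, show Z a = X a - Y a from rfl]; abel
        _ = (X b - X a) - (((b - P.pt i) / (P.pt (i + 1) - P.pt i)
              - (a - P.pt i) / (P.pt (i + 1) - P.pt i)) •
              (X (P.pt (i + 1)) - X (P.pt i))) := by
            rw [hya, hyb, sub_smul]; abel
        _ = _ := by rw [hco]
    rw [hzz]
    refine (norm_sub_le _ _).trans ?_
    rw [norm_smul, Real.norm_eq_abs,
      abs_of_nonneg (div_nonneg (sub_nonneg.mpr hab) (sub_nonneg.mpr (P.mono i hi)))]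
  -- now bound the q'-variation of Z
  unfold qVar
  refine iSup_le fun D => ?_
  refine ENNReal.ofReal_le_ofReal ?_
  set M := D.N with hMdef
  set s : ℕ → ℝ := D.pt with hsdef
  have hMpos : 0 < M := D.pos
  have hs01 : ∀ j, j ≤ M → s j ∈ Set.Icc (0:ℝ) 1 :=
    fun j hj => ⟨D.pt_nonneg hj, D.pt_le_one hj⟩
  have hsm : ∀ j k : ℕ, j ≤ k → k ≤ M → s j ≤ s k := fun j k h1 h2 => D.pt_le_pt h1 h2
  set e : ℕ → ℝ := fun j => min (P.pt (P.idx (s j) + 1)) (s (j + 1)) with hedef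
  set f : ℕ → ℝ := fun j => max (P.pt (P.idx (s (j + 1)))) (s j) with hfdef
  have hA0 : ∀ j, j ≤ M → P.pt (P.idx (s j)) ≤ s j := fun j hj => P.pt_idx_le (hs01 j hj).1
  have hA1 : ∀ j, j < M → s j ≤ e j := by
    intro j hj
    exact le_min (P.le_pt_idx_succ (hs01 j hj.le).2) (hsm j (j + 1) (Nat.le_succ j) hj)
  have hA2 : ∀ j, e j ≤ s (j + 1) := fun j => min_le_right _ _
  have hA3 : ∀ j, e j ≤ P.pt (P.idx (s j) + 1) := fun j => min_le_left _ _
  have hB0 : ∀ j, P.pt (P.idx (s (j + 1))) ≤ f j := fun j => le_max_left _ _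
  have hB2 : ∀ j, s j ≤ f j := fun j => le_max_right _ _
  have hB3 : ∀ j, j < M → s (j + 1) ≤ P.pt (P.idx (s (j + 1)) + 1) :=
    fun j hj => P.le_pt_idx_succ (hs01 (j + 1) hj).2
  have hB1 : ∀ j, j < M → f j ≤ s (j + 1) := by
    intro j hj
    exact max_le (hA0 (j + 1) hj) (hsm j (j + 1) (Nat.le_succ j) hj)
  set xA : ℕ → ℝ := fun j => ‖X (e j) - X (s j)‖ with hxA
  set yA : ℕ → ℝ := fun j => (e j - s j) / (P.pt (P.idx (s j) + 1) - P.pt (P.idx (s j)))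
      * ‖X (P.pt (P.idx (s j) + 1)) - X (P.pt (P.idx (s j)))‖ with hyA
  set xB : ℕ → ℝ := fun j => ‖X (s (j + 1)) - X (f j)‖ with hxB
  set yB : ℕ → ℝ := fun j => (s (j + 1) - f j)
      / (P.pt (P.idx (s (j + 1)) + 1) - P.pt (P.idx (s (j + 1))))
      * ‖X (P.pt (P.idx (s (j + 1)) + 1)) - X (P.pt (P.idx (s (j + 1))))‖ with hyB
  -- splitting of an increment of Z
  have hsplit : ∀ j, j < M →
      ‖Z (s (j + 1)) - Z (s j)‖ ≤ ‖Z (e j) - Z (s j)‖ + ‖Z (s (j + 1)) - Z (f j)‖ := by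
    intro j hj
    rcases lt_or_eq_of_le (P.idx_mono (hsm j (j + 1) (Nat.le_succ j) hj)) with hcase | hcase
    · have h1 : P.pt (P.idx (s j) + 1) ≤ P.pt (P.idx (s (j + 1))) :=
        P.pt_le_pt hcase (P.idx_lt _).le
      have hee : e j = P.pt (P.idx (s j) + 1) := by
        simp only [hedef]
        exact min_eq_left (h1.trans (hA0 (j + 1) hj))
      have hff : f j = P.pt (P.idx (s (j + 1))) := by
        simp only [hfdef]
        exact max_eq_left ((P.le_pt_idx_succ (hs01 j hj.le).2).trans h1)
      have hze : Z (e j) = 0 := by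
        rw [hee]; exact hZpt _ (Nat.succ_le_of_lt (P.idx_lt (s j)))
      have hzf : Z (f j) = 0 := by
        rw [hff]; exact hZpt _ (P.idx_lt (s (j + 1))).le
      have heq : Z (s (j + 1)) - Z (s j) = (Z (e j) - Z (s j)) + (Z (s (j + 1)) - Z (f j)) := by
        rw [hze, hzf]; abel
      calc ‖Z (s (j + 1)) - Z (s j)‖
          = ‖(Z (e j) - Z (s j)) + (Z (s (j + 1)) - Z (f j))‖ := by rw [heq]
        _ ≤ _ := norm_add_le _ _
    · have hee : e j = s (j + 1) := by
        simp only [hedef]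
        exact min_eq_right (by rw [hcase]; exact hB3 j hj)
      rw [hee]
      exact le_add_of_nonneg_right (norm_nonneg _)
  set c : ℝ := 2 ^ q' * ((4 * η) ^ (q' - q) * 2 ^ q) with hcdef
  have hc0 : 0 ≤ c := by positivity
  -- termwise bound
  have hterm : ∀ j, j < M → ‖Z (s (j + 1)) - Z (s j)‖ ^ q' ≤
      c * (xA j ^ q + yA j ^ q + (xB j ^ q + yB j ^ q)) := by
    intro j hj
    have he01 : e j ∈ Set.Icc (0:ℝ) 1 :=
      ⟨le_trans (hs01 j hj.le).1 (hA1 j hj), le_trans (hA2 j) (hs01 (j + 1) hj).2⟩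
    have hf01 : f j ∈ Set.Icc (0:ℝ) 1 :=
      ⟨le_trans (hs01 j hj.le).1 (hB2 j), le_trans (hB1 j hj) (hs01 (j + 1) hj).2⟩
    have haZ : ‖Z (e j) - Z (s j)‖ ≤ 4 * η := by
      have h1 := hZsmall (e j) he01
      have h2 := hZsmall (s j) (hs01 j hj.le)
      calc ‖Z (e j) - Z (s j)‖ ≤ ‖Z (e j)‖ + ‖Z (s j)‖ := norm_sub_le _ _
        _ ≤ 2 * η + 2 * η := add_le_add h1 h2
        _ = 4 * η := by ring
    have hbZ : ‖Z (s (j + 1)) - Z (f j)‖ ≤ 4 * η := by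
      have h1 := hZsmall (s (j + 1)) (hs01 (j + 1) hj)
      have h2 := hZsmall (f j) hf01
      calc ‖Z (s (j + 1)) - Z (f j)‖ ≤ ‖Z (s (j + 1))‖ + ‖Z (f j)‖ := norm_sub_le _ _
        _ ≤ 2 * η + 2 * η := add_le_add h1 h2
        _ = 4 * η := by ring
    have haXY : ‖Z (e j) - Z (s j)‖ ≤ xA j + yA j :=
      hZseg (P.idx (s j)) (P.idx_lt _) (s j) (e j) (hA0 j hj.le) (hA1 j hj) (hA3 j)
    have hbXY : ‖Z (s (j + 1)) - Z (f j)‖ ≤ xB j + yB j :=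
      hZseg (P.idx (s (j + 1))) (P.idx_lt _) (f j) (s (j + 1)) (hB0 j) (hB1 j hj) (hB3 j hj)
    have hxA0 : 0 ≤ xA j := norm_nonneg _
    have hxB0 : 0 ≤ xB j := norm_nonneg _
    have hyA0 : 0 ≤ yA j :=
      mul_nonneg (div_nonneg (sub_nonneg.mpr (hA1 j hj))
        (sub_nonneg.mpr (P.mono _ (P.idx_lt _)))) (norm_nonneg _)
    have hyB0 : 0 ≤ yB j :=
      mul_nonneg (div_nonneg (sub_nonneg.mpr (hB1 j hj))
        (sub_nonneg.mpr (P.mono _ (P.idx_lt _)))) (norm_nonneg _)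
    have h1 : ‖Z (s (j + 1)) - Z (s j)‖ ^ q' ≤
        2 ^ q' * (‖Z (e j) - Z (s j)‖ ^ q' + ‖Z (s (j + 1)) - Z (f j)‖ ^ q') :=
      le_trans (Real.rpow_le_rpow (norm_nonneg _) (hsplit j hj) hq'0.le)
        (twopow q' _ _ hq'1.le (norm_nonneg _) (norm_nonneg _))
    have h2 : ‖Z (e j) - Z (s j)‖ ^ q' ≤ (4 * η) ^ (q' - q) * (2 ^ q * (xA j ^ q + yA j ^ q)) := by
      calc ‖Z (e j) - Z (s j)‖ ^ q' ≤ (4 * η) ^ (q' - q) * ‖Z (e j) - Z (s j)‖ ^ q :=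
            interp _ _ (norm_nonneg _) (by positivity) haZ
        _ ≤ (4 * η) ^ (q' - q) * (xA j + yA j) ^ q :=
            mul_le_mul_of_nonneg_left
              (Real.rpow_le_rpow (norm_nonneg _) haXY hq0.le) (by positivity)
        _ ≤ (4 * η) ^ (q' - q) * (2 ^ q * (xA j ^ q + yA j ^ q)) :=
            mul_le_mul_of_nonneg_left (twopow q _ _ hq hxA0 hyA0) (by positivity)
    have h3 : ‖Z (s (j + 1)) - Z (f j)‖ ^ q'
        ≤ (4 * η) ^ (q' - q) * (2 ^ q * (xB j ^ q + yB j ^ q)) := by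
      calc ‖Z (s (j + 1)) - Z (f j)‖ ^ q' ≤ (4 * η) ^ (q' - q) * ‖Z (s (j + 1)) - Z (f j)‖ ^ q :=
            interp _ _ (norm_nonneg _) (by positivity) hbZ
        _ ≤ (4 * η) ^ (q' - q) * (xB j + yB j) ^ q :=
            mul_le_mul_of_nonneg_left
              (Real.rpow_le_rpow (norm_nonneg _) hbXY hq0.le) (by positivity)
        _ ≤ (4 * η) ^ (q' - q) * (2 ^ q * (xB j ^ q + yB j ^ q)) :=
            mul_le_mul_of_nonneg_left (twopow q _ _ hq hxB0 hyB0) (by positivity)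
    calc ‖Z (s (j + 1)) - Z (s j)‖ ^ q'
        ≤ 2 ^ q' * (‖Z (e j) - Z (s j)‖ ^ q' + ‖Z (s (j + 1)) - Z (f j)‖ ^ q') := h1
      _ ≤ 2 ^ q' * ((4 * η) ^ (q' - q) * (2 ^ q * (xA j ^ q + yA j ^ q))
            + (4 * η) ^ (q' - q) * (2 ^ q * (xB j ^ q + yB j ^ q))) :=
          mul_le_mul_of_nonneg_left (add_le_add h2 h3) (by positivity)
      _ = c * (xA j ^ q + yA j ^ q + (xB j ^ q + yB j ^ q)) := by
          rw [hcdef]; ring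
  -- the four sum bounds
  have hS1 : ∑ j ∈ Finset.range M, xA j ^ q ≤ C ^ q := by
    refine interleave_bound q X C key hCq0 M s e hA1 (fun k _ => hA2 k) ?_ ?_
    · intro _
      rw [show s 0 = D.pt 0 from rfl, D.first]
    · intro hm
      have hMM : M - 1 + 1 = M := Nat.succ_pred_eq_of_pos hm
      calc e (M - 1) ≤ s (M - 1 + 1) := hA2 _
        _ = 1 := by rw [hMM, show s M = D.pt D.N from rfl, D.last]
  have hS2 : ∑ j ∈ Finset.range M, xB j ^ q ≤ C ^ q := by
    refine interleave_bound q X C key hCq0 M f (fun j => s (j + 1)) hB1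
      (fun k _ => hB2 (k + 1)) ?_ ?_
    · intro hm
      refine le_trans ?_ (hB2 0)
      rw [show s 0 = D.pt 0 from rfl, D.first]
    · intro hm
      have hMM : M - 1 + 1 = M := Nat.succ_pred_eq_of_pos hm
      show s (M - 1 + 1) ≤ 1
      rw [hMM, show s M = D.pt D.N from rfl, D.last]
  have hS3 : ∑ j ∈ Finset.range M, yA j ^ q ≤ C ^ q := by
    have hmaps : ∀ j ∈ Finset.range M, P.idx (s j) ∈ Finset.range P.N :=
      fun j _ => Finset.mem_range.mpr (P.idx_lt (s j))
    rw [← Finset.sum_fiberwise_of_maps_to hmaps (fun j => yA j ^ q)]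
    refine le_trans (Finset.sum_le_sum ?_) (key P)
    intro i hi
    have hiN : i < P.N := Finset.mem_range.mp hi
    have hTmem : ∀ j ∈ (Finset.range M).filter (fun j => P.idx (s j) = i),
        j < M ∧ P.idx (s j) = i := by
      intro j hj; rw [Finset.mem_filter, Finset.mem_range] at hj; exact hj
    have hL0 : 0 ≤ P.pt (i + 1) - P.pt i := sub_nonneg.mpr (P.mono i hiN)
    have hsumlam : ∑ j ∈ (Finset.range M).filter (fun j => P.idx (s j) = i),
        (e j - s j) / (P.pt (i + 1) - P.pt i) ≤ 1 := by
      rcases eq_or_lt_of_le hL0 with hL | hL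
      · have hz : ∀ j ∈ (Finset.range M).filter (fun j => P.idx (s j) = i),
            (e j - s j) / (P.pt (i + 1) - P.pt i) = 0 := by
          intro j _; rw [← hL, div_zero]
        rw [Finset.sum_congr rfl hz]
        simp
      · rw [← Finset.sum_div, div_le_one hL]
        refine sum_len_le s e (P.pt i) _ (P.pt (i + 1)) ?_ ?_ ?_ ?_ (by linarith)
        · intro j hj
          obtain ⟨hjM, hji⟩ := hTmem j hj
          rw [← hji]; exact hA0 j hjM.le
        · intro j hj; exact hA1 j (hTmem j hj).1
        · intro j hj
          obtain ⟨hjM, hji⟩ := hTmem j hj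
          rw [← hji]; exact hA3 j
        · intro j hj k hk hjk
          obtain ⟨hkM, _⟩ := hTmem k hk
          exact le_trans (hA2 j) (hsm (j + 1) k hjk hkM.le)
    calc ∑ j ∈ (Finset.range M).filter (fun j => P.idx (s j) = i), yA j ^ q
        ≤ ∑ j ∈ (Finset.range M).filter (fun j => P.idx (s j) = i),
            (e j - s j) / (P.pt (i + 1) - P.pt i) * ‖X (P.pt (i + 1)) - X (P.pt i)‖ ^ q := by
          refine Finset.sum_le_sum fun j hj => ?_
          obtain ⟨hjM, hji⟩ := hTmem j hj
          have hyAj : yA j = (e j - s j) / (P.pt (i + 1) - P.pt i)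
              * ‖X (P.pt (i + 1)) - X (P.pt i)‖ := by
            simp only [hyA, hji]
          have hlam0 : 0 ≤ (e j - s j) / (P.pt (i + 1) - P.pt i) :=
            div_nonneg (sub_nonneg.mpr (hA1 j hjM)) hL0
          have hlam1 : (e j - s j) / (P.pt (i + 1) - P.pt i) ≤ 1 := by
            rcases eq_or_lt_of_le hL0 with hL | hL
            · rw [← hL, div_zero]; exact zero_le_one
            · rw [div_le_one hL]
              have h1 := hA3 j; rw [hji] at h1
              have h2 := hA0 j hjM.le; rw [hji] at h2
              linarith
          rw [hyAj, Real.mul_rpow hlam0 (norm_nonneg _)]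
          exact mul_le_mul_of_nonneg_right (rpow_le_self _ hlam0 hlam1)
            (Real.rpow_nonneg (norm_nonneg _) q)
      _ = (∑ j ∈ (Finset.range M).filter (fun j => P.idx (s j) = i),
            (e j - s j) / (P.pt (i + 1) - P.pt i)) * ‖X (P.pt (i + 1)) - X (P.pt i)‖ ^ q := by
          rw [Finset.sum_mul]
      _ ≤ 1 * ‖X (P.pt (i + 1)) - X (P.pt i)‖ ^ q :=
          mul_le_mul_of_nonneg_right hsumlam (Real.rpow_nonneg (norm_nonneg _) q)
      _ = ‖X (P.pt (i + 1)) - X (P.pt i)‖ ^ q := one_mul _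
  have hS4 : ∑ j ∈ Finset.range M, yB j ^ q ≤ C ^ q := by
    have hmaps : ∀ j ∈ Finset.range M, P.idx (s (j + 1)) ∈ Finset.range P.N :=
      fun j _ => Finset.mem_range.mpr (P.idx_lt (s (j + 1)))
    rw [← Finset.sum_fiberwise_of_maps_to hmaps (fun j => yB j ^ q)]
    refine le_trans (Finset.sum_le_sum ?_) (key P)
    intro i hi
    have hiN : i < P.N := Finset.mem_range.mp hi
    have hTmem : ∀ j ∈ (Finset.range M).filter (fun j => P.idx (s (j + 1)) = i),
        j < M ∧ P.idx (s (j + 1)) = i := by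
      intro j hj; rw [Finset.mem_filter, Finset.mem_range] at hj; exact hj
    have hL0 : 0 ≤ P.pt (i + 1) - P.pt i := sub_nonneg.mpr (P.mono i hiN)
    have hsumlam : ∑ j ∈ (Finset.range M).filter (fun j => P.idx (s (j + 1)) = i),
        (s (j + 1) - f j) / (P.pt (i + 1) - P.pt i) ≤ 1 := by
      rcases eq_or_lt_of_le hL0 with hL | hL
      · have hz : ∀ j ∈ (Finset.range M).filter (fun j => P.idx (s (j + 1)) = i),
            (s (j + 1) - f j) / (P.pt (i + 1) - P.pt i) = 0 := by
          intro j _; rw [← hL, div_zero]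
        rw [Finset.sum_congr rfl hz]
        simp
      · rw [← Finset.sum_div, div_le_one hL]
        refine sum_len_le f (fun j => s (j + 1)) (P.pt i) _ (P.pt (i + 1)) ?_ ?_ ?_ ?_
          (by linarith)
        · intro j hj
          obtain ⟨hjM, hji⟩ := hTmem j hj
          rw [← hji]; exact hB0 j
        · intro j hj; exact hB1 j (hTmem j hj).1
        · intro j hj
          obtain ⟨hjM, hji⟩ := hTmem j hj
          rw [← hji]; exact hB3 j hjM
        · intro j hj k hk hjk
          obtain ⟨hkM, _⟩ := hTmem k hk
          exact le_trans (hsm (j + 1) k hjk hkM.le) (hB2 k)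
    calc ∑ j ∈ (Finset.range M).filter (fun j => P.idx (s (j + 1)) = i), yB j ^ q
        ≤ ∑ j ∈ (Finset.range M).filter (fun j => P.idx (s (j + 1)) = i),
            (s (j + 1) - f j) / (P.pt (i + 1) - P.pt i)
              * ‖X (P.pt (i + 1)) - X (P.pt i)‖ ^ q := by
          refine Finset.sum_le_sum fun j hj => ?_
          obtain ⟨hjM, hji⟩ := hTmem j hj
          have hyBj : yB j = (s (j + 1) - f j) / (P.pt (i + 1) - P.pt i)
              * ‖X (P.pt (i + 1)) - X (P.pt i)‖ := by
            simp only [hyB, hji]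
          have hlam0 : 0 ≤ (s (j + 1) - f j) / (P.pt (i + 1) - P.pt i) :=
            div_nonneg (sub_nonneg.mpr (hB1 j hjM)) hL0
          have hlam1 : (s (j + 1) - f j) / (P.pt (i + 1) - P.pt i) ≤ 1 := by
            rcases eq_or_lt_of_le hL0 with hL | hL
            · rw [← hL, div_zero]; exact zero_le_one
            · rw [div_le_one hL]
              have h1 := hB3 j hjM; rw [hji] at h1
              have h2 := hB0 j; rw [hji] at h2
              linarith
          rw [hyBj, Real.mul_rpow hlam0 (norm_nonneg _)]
          exact mul_le_mul_of_nonneg_right (rpow_le_self _ hlam0 hlam1)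
            (Real.rpow_nonneg (norm_nonneg _) q)
      _ = (∑ j ∈ (Finset.range M).filter (fun j => P.idx (s (j + 1)) = i),
            (s (j + 1) - f j) / (P.pt (i + 1) - P.pt i))
              * ‖X (P.pt (i + 1)) - X (P.pt i)‖ ^ q := by
          rw [Finset.sum_mul]
      _ ≤ 1 * ‖X (P.pt (i + 1)) - X (P.pt i)‖ ^ q :=
          mul_le_mul_of_nonneg_right hsumlam (Real.rpow_nonneg (norm_nonneg _) q)
      _ = ‖X (P.pt (i + 1)) - X (P.pt i)‖ ^ q := one_mul _
  -- final assembly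
  set S' := ∑ j ∈ Finset.range M, ‖Z (s (j + 1)) - Z (s j)‖ ^ q' with hS'def
  have hS'0 : 0 ≤ S' := Finset.sum_nonneg fun j _ => Real.rpow_nonneg (norm_nonneg _) q'
  have hK' : K ≠ 0 := hK.ne'
  have hC1 : C ^ q + 1 ≠ 0 := by positivity
  have hmain : S' ≤ ε ^ q' := by
    calc S' ≤ ∑ j ∈ Finset.range M, c * (xA j ^ q + yA j ^ q + (xB j ^ q + yB j ^ q)) :=
          Finset.sum_le_sum fun j hj => hterm j (Finset.mem_range.mp hj)
      _ = c * ((∑ j ∈ Finset.range M, xA j ^ q) + (∑ j ∈ Finset.range M, yA j ^ q)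
            + ((∑ j ∈ Finset.range M, xB j ^ q) + (∑ j ∈ Finset.range M, yB j ^ q))) := by
          rw [← Finset.mul_sum, Finset.sum_add_distrib, Finset.sum_add_distrib,
            Finset.sum_add_distrib]
      _ ≤ c * (C ^ q + C ^ q + (C ^ q + C ^ q)) := by
          refine mul_le_mul_of_nonneg_left ?_ hc0
          exact add_le_add (add_le_add hS1 hS3) (add_le_add hS2 hS4)
      _ = K * (η ^ (q' - q) * C ^ q) := by
          rw [hcdef, hKdef, Real.mul_rpow (by norm_num : (0:ℝ) ≤ 4) hη.le]; ring
      _ ≤ K * (ρ * (C ^ q + 1)) := by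
          refine mul_le_mul_of_nonneg_left ?_ hK.le
          exact mul_le_mul hηρ (by linarith) hCq0 hρ.le
      _ = ε ^ q' := by
          rw [hρdef]; field_simp
  have hfin : S' ^ (1 / q') ≤ (ε ^ q') ^ (1 / q') :=
    Real.rpow_le_rpow hS'0 hmain (by positivity)
  rwa [← Real.rpow_mul hε.le, mul_one_div, div_self hq'0.ne', Real.rpow_one] at hfin
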